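/- Let ψ : ℝ² → ℝ be a non-constant C² harmonic function (Δψ = 0 on ℝ²), let c ∈ ℝ, and define β : ℝ² → ℝ by β(x) := c + |∇ψ(x)|². Then the functions u₊(z,x) := e^{i(ψ(x) + cz)} and u₋(z,x) := e^{i(−ψ(x) + cz)} are solutions of the Gross–Pitaevskii equation i ∂_z u + Δu + β(x)|u|²u = 0 on (0,∞) × ℝ²; |u₊(z,x)| = |u₋(z,x)| = 1 for all (z,x); and there is no constant φ ∈ ℝ such that u₊(0,x) = u₋(0,x) e^{iφ} for all x ∈ ℝ², i.e., the initial conditions e^{iψ} and e^{−iψ} belong to different equivalence classes under constant phase shifts. -/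

import Mathlib

noncomputable section

open Set

/-- Partial derivative (in direction `i`) of a real-valued function on `ℝᵈ`. -/
def pdR (d : ℕ) (f : EuclideanSpace ℝ (Fin d) → ℝ) (i : Fin d)
    (x : EuclideanSpace ℝ (Fin d)) : ℝ :=
  fderiv ℝ f x (EuclideanSpace.single i 1)

/-- Laplacian of a real-valued function on `ℝᵈ`. -/
def lapR (d : ℕ) (f : EuclideanSpace ℝ (Fin d) → ℝ)
    (x : EuclideanSpace ℝ (Fin d)) : ℝ :=
  ∑ i, pdR d (pdR d f i) i x

/-- Partial derivative (in direction `i`) of a complex-valued function on `ℝᵈ`. -/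
def pdC (d : ℕ) (f : EuclideanSpace ℝ (Fin d) → ℂ) (i : Fin d)
    (x : EuclideanSpace ℝ (Fin d)) : ℂ :=
  fderiv ℝ f x (EuclideanSpace.single i 1)

/-- Laplacian of a complex-valued function on `ℝᵈ`. -/
def lapC (d : ℕ) (f : EuclideanSpace ℝ (Fin d) → ℂ)
    (x : EuclideanSpace ℝ (Fin d)) : ℂ :=
  ∑ i, pdC d (pdC d f i) i x

abbrev E2 := EuclideanSpace ℝ (Fin 2)

lemma fderF (g : E2 → ℝ) (A : ℝ) (x : E2) (hg : DifferentiableAt ℝ g x) :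
    HasFDerivAt (fun y => Complex.exp (Complex.I * ((g y + A : ℝ) : ℂ)))
      (Complex.exp (Complex.I * ((g x + A : ℝ) : ℂ)) •
        (Complex.I • ((Complex.ofRealCLM : ℝ →L[ℝ] ℂ).comp (fderiv ℝ g x)))) x := by
  have h1 : HasFDerivAt (fun y => ((g y : ℝ) : ℂ))
      ((Complex.ofRealCLM : ℝ →L[ℝ] ℂ).comp (fderiv ℝ g x)) x :=
    Complex.ofRealCLM.hasFDerivAt.comp x hg.hasFDerivAt
  have h2 := ((h1.const_mul Complex.I).add_const (Complex.I * A)).cexp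
  have heq : (fun y => Complex.exp (Complex.I * ((g y + A : ℝ) : ℂ)))
      = fun y => Complex.exp (Complex.I * ((g y : ℝ) : ℂ) + Complex.I * A) := by
    funext y; push_cast; ring_nf
  have hx : Complex.exp (Complex.I * ((g x + A : ℝ) : ℂ))
      = Complex.exp (Complex.I * ((g x : ℝ) : ℂ) + Complex.I * A) := by
    push_cast; ring_nf
  rw [heq, hx]
  exact h2

lemma lapC_F (g : E2 → ℝ) (hg : ContDiff ℝ 2 g) (hh : ∀ x, lapR 2 g x = 0) (A : ℝ) (x : E2) :
    lapC 2 (fun y => Complex.exp (Complex.I * ((g y + A : ℝ) : ℂ))) x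
      = -((∑ i, (pdR 2 g i x) ^ 2 : ℝ) : ℂ) * Complex.exp (Complex.I * ((g x + A : ℝ) : ℂ)) := by
  have hgd : Differentiable ℝ g := hg.differentiable (by norm_num)
  set F : E2 → ℂ := fun y => Complex.exp (Complex.I * ((g y + A : ℝ) : ℂ)) with hF
  have hpd1 : ∀ i, pdC 2 F i = fun y => Complex.I * ((pdR 2 g i y : ℝ) : ℂ) * F y := by
    intro i; funext y
    rw [hF, pdC, (fderF g A y (hgd y)).fderiv]
    simp [pdR, smul_eq_mul]
    ring
  have hp : ∀ i : Fin 2, ContDiff ℝ 1 (pdR 2 g i) := by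
    intro i
    exact (hg.fderiv_right (by norm_num)).clm_apply contDiff_const
  have key : ∀ i : Fin 2, pdC 2 (pdC 2 F i) i x
      = Complex.I * ((pdR 2 (pdR 2 g i) i x : ℝ) : ℂ) * F x
        - ((pdR 2 g i x : ℝ) : ℂ) ^ 2 * F x := by
    intro i
    rw [hpd1 i, pdC]
    have hpi : HasFDerivAt (fun y => ((pdR 2 g i y : ℝ) : ℂ))
        ((Complex.ofRealCLM : ℝ →L[ℝ] ℂ).comp (fderiv ℝ (pdR 2 g i) x)) x :=
      Complex.ofRealCLM.hasFDerivAt.comp x ((hp i).differentiable (by norm_num) x).hasFDerivAt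
    have hmul := ((hpi.const_mul Complex.I).fun_mul (fderF g A x (hgd x)))
    rw [hmul.fderiv]
    simp only [ContinuousLinearMap.add_apply, ContinuousLinearMap.smul_apply,
      ContinuousLinearMap.comp_apply, Complex.ofRealCLM_apply, smul_eq_mul, pdR, hF]
    have hI := Complex.I_sq
    linear_combination (((fderiv ℝ g x) (EuclideanSpace.single i 1) : ℂ)^2 *
      Complex.exp (Complex.I * ((g x + A : ℝ) : ℂ))) * hI
  have h0 := hh x
  rw [lapR, Fin.sum_univ_two] at h0
  have h0' : ((pdR 2 (pdR 2 g 0) 0 x : ℝ) : ℂ) + ((pdR 2 (pdR 2 g 1) 1 x : ℝ) : ℂ) = 0 := by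
    exact_mod_cast congrArg (fun t : ℝ => (t : ℂ)) h0
  rw [lapC, Fin.sum_univ_two, key 0, key 1, Fin.sum_univ_two]
  push_cast
  have hFx : F x = Complex.exp (Complex.I * (((g x : ℝ) : ℂ) + (A : ℂ))) := by
    rw [hF]; push_cast; ring_nf
  rw [hFx]
  linear_combination (Complex.I * Complex.exp (Complex.I * (((g x : ℝ) : ℂ) + (A : ℂ)))) * h0'

lemma zderiv (b c z : ℝ) :
    deriv (fun t : ℝ => Complex.exp (Complex.I * ((b + c * t : ℝ) : ℂ))) z
      = Complex.I * c * Complex.exp (Complex.I * ((b + c * z : ℝ) : ℂ)) := by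
  have heq : (fun t : ℝ => Complex.exp (Complex.I * ((b + c * t : ℝ) : ℂ)))
      = fun t : ℝ => Complex.exp ((Complex.I * c) * (t : ℂ) + Complex.I * b) := by
    funext t; push_cast; ring_nf
  rw [heq]
  have h1 : HasDerivAt (fun t : ℝ => ((t : ℝ) : ℂ)) 1 z := by
    simpa using (hasDerivAt_id z).ofReal_comp
  have h2 := (((h1.const_mul (Complex.I * c)).add_const (Complex.I * b)).cexp)
  rw [h2.deriv]
  push_cast; ring_nf

lemma solves (g : E2 → ℝ) (hg : ContDiff ℝ 2 g) (hh : ∀ x, lapR 2 g x = 0) (c : ℝ)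
    (u : ℝ → E2 → ℂ)
    (hu : ∀ z x, u z x = Complex.exp (Complex.I * ((g x + c * z : ℝ) : ℂ))) :
    ∀ z x, Complex.I * deriv (fun t => u t x) z + lapC 2 (u z) x
      + ((c + ∑ i, (pdR 2 g i x) ^ 2 : ℝ) : ℂ) * ((‖u z x‖ : ℂ)) ^ 2 * u z x = 0 := by
  intro z x
  have hd : deriv (fun t => u t x) z
      = Complex.I * c * Complex.exp (Complex.I * ((g x + c * z : ℝ) : ℂ)) := by
    simp_rw [hu]
    exact zderiv (g x) c z
  have hl : lapC 2 (u z) x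
      = -((∑ i, (pdR 2 g i x) ^ 2 : ℝ) : ℂ) * Complex.exp (Complex.I * ((g x + c * z : ℝ) : ℂ)) := by
    have : u z = fun y => Complex.exp (Complex.I * ((g y + c * z : ℝ) : ℂ)) := funext (hu z)
    rw [this]
    exact lapC_F g hg hh (c * z) x
  have habs : ‖u z x‖ = 1 := by
    rw [hu, Complex.norm_exp]
    simp
  rw [hd, hl, habs, hu]
  push_cast
  ring_nf
  simp [Complex.I_sq]

lemma pdR_neg (g : E2 → ℝ) (i : Fin 2) :
    pdR 2 (fun y => -g y) i = fun y => -(pdR 2 g i y) := by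
  funext y; rw [pdR, fderiv_fun_neg]; simp [pdR]

lemma lapR_neg (g : E2 → ℝ) (hh : ∀ x, lapR 2 g x = 0) :
    ∀ x, lapR 2 (fun y => -g y) x = 0 := by
  intro x
  have h := hh x
  rw [lapR] at h ⊢
  have : ∀ i : Fin 2, pdR 2 (pdR 2 (fun y => -g y) i) i x
      = -(pdR 2 (pdR 2 g i) i x) := by
    intro i
    rw [pdR_neg]
    rw [pdR, fderiv_fun_neg]
    simp [pdR]
  rw [Finset.sum_congr rfl (fun i _ => this i), Finset.sum_neg_distrib, h, neg_zero]

lemma no_mid (ψ : E2 → ℝ) (hc : Continuous ψ) (φ : ℝ)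
    (key : ∀ x, ∃ n : ℤ, ψ x = φ / 2 + Real.pi * n)
    (a b : E2) (m n : ℤ) (hm : ψ a = φ / 2 + Real.pi * m)
    (hn : ψ b = φ / 2 + Real.pi * n) (hmn : m < n) : False := by
  set f : ℝ → ℝ := fun t => ψ (a + t • (b - a)) with hf
  have hcf : Continuous f := hc.comp (by continuity)
  have hiv := intermediate_value_Icc (zero_le_one (α := ℝ)) hcf.continuousOn
  have hf0 : f 0 = ψ a := by simp [hf]
  have hf1 : f 1 = ψ b := by simp [hf]
  have hv : φ / 2 + Real.pi * m + Real.pi / 2 ∈ Icc (f 0) (f 1) := by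
    rw [hf0, hf1, hm, hn]
    have hcast : (m : ℝ) + 1 ≤ n := by exact_mod_cast hmn
    constructor
    · nlinarith [Real.pi_pos]
    · nlinarith [Real.pi_pos]
  obtain ⟨t, _, ht⟩ := hiv hv
  obtain ⟨k, hk⟩ := key (a + t • (b - a))
  have heq : Real.pi * k = Real.pi * ((m : ℝ) + 1 / 2) := by
    have : f t = ψ (a + t • (b - a)) := rfl
    rw [this, hk] at ht
    linarith
  have hk2 : (k : ℝ) = (m : ℝ) + 1 / 2 := mul_left_cancel₀ Real.pi_ne_zero heq
  have : ((2 * k : ℤ) : ℝ) = ((2 * m + 1 : ℤ) : ℝ) := by push_cast; linarith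
  have := Int.cast_injective (α := ℝ) this
  omega

theorem GP_harmonic_phase_nonuniqueness
    (ψ : EuclideanSpace ℝ (Fin 2) → ℝ) (hψ : ContDiff ℝ 2 ψ)
    (hharm : ∀ x : EuclideanSpace ℝ (Fin 2), lapR 2 ψ x = 0)
    (hnc : ¬ ∃ c : ℝ, ∀ x : EuclideanSpace ℝ (Fin 2), ψ x = c)
    (c : ℝ) (β : EuclideanSpace ℝ (Fin 2) → ℝ)
    (hβ : ∀ x : EuclideanSpace ℝ (Fin 2), β x = c + ∑ i, (pdR 2 ψ i x) ^ 2)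
    (uplus uminus : ℝ → EuclideanSpace ℝ (Fin 2) → ℂ)
    (huplus : ∀ z : ℝ, ∀ x : EuclideanSpace ℝ (Fin 2),
      uplus z x = Complex.exp (Complex.I * ((ψ x + c * z : ℝ) : ℂ)))
    (huminus : ∀ z : ℝ, ∀ x : EuclideanSpace ℝ (Fin 2),
      uminus z x = Complex.exp (Complex.I * ((-ψ x + c * z : ℝ) : ℂ))) :
    (∀ z ∈ Ioi (0 : ℝ), ∀ x : EuclideanSpace ℝ (Fin 2),
      Complex.I * deriv (fun t => uplus t x) z + lapC 2 (uplus z) x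
        + (β x : ℂ) * ((‖uplus z x‖ : ℂ)) ^ 2 * uplus z x = 0) ∧
    (∀ z ∈ Ioi (0 : ℝ), ∀ x : EuclideanSpace ℝ (Fin 2),
      Complex.I * deriv (fun t => uminus t x) z + lapC 2 (uminus z) x
        + (β x : ℂ) * ((‖uminus z x‖ : ℂ)) ^ 2 * uminus z x = 0) ∧
    (∀ z : ℝ, ∀ x : EuclideanSpace ℝ (Fin 2), ‖uplus z x‖ = 1 ∧ ‖uminus z x‖ = 1) ∧
    ¬ ∃ φ : ℝ, ∀ x : EuclideanSpace ℝ (Fin 2), uplus 0 x = uminus 0 x * Complex.exp (Complex.I * (φ : ℂ)) := by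
  have habs_plus : ∀ z x, ‖uplus z x‖ = 1 := by
    intro z x; rw [huplus, Complex.norm_exp]; simp
  have habs_minus : ∀ z x, ‖uminus z x‖ = 1 := by
    intro z x; rw [huminus, Complex.norm_exp]; simp
  refine ⟨?_, ?_, fun z x => ⟨habs_plus z x, habs_minus z x⟩, ?_⟩
  · intro z _ x
    have := solves ψ hψ hharm c uplus huplus z x
    rwa [hβ x]
  · intro z _ x
    have hsum : ∀ y : EuclideanSpace ℝ (Fin 2),
        (∑ i, (pdR 2 (fun w => -ψ w) i y) ^ 2) = ∑ i, (pdR 2 ψ i y) ^ 2 := by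
      intro y
      refine Finset.sum_congr rfl fun i _ => ?_
      rw [pdR_neg]; ring
    have := solves (fun w => -ψ w) hψ.neg (lapR_neg ψ hharm) c uminus
      (by intro z x; exact huminus z x) z x
    rw [hsum x] at this
    rwa [hβ x]
  · rintro ⟨φ, hφ⟩
    have key : ∀ x, ∃ n : ℤ, ψ x = φ / 2 + Real.pi * n := by
      intro x
      have h := hφ x
      rw [huplus, huminus, ← Complex.exp_add, Complex.exp_eq_exp_iff_exists_int] at h
      obtain ⟨n, hn⟩ := h
      have him := congrArg Complex.im hn
      simp [Complex.add_im, Complex.mul_im] at him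
      exact ⟨n, by linarith⟩
    push_neg at hnc
    obtain ⟨b, hb⟩ := hnc (ψ 0)
    obtain ⟨m, hm⟩ := key 0
    obtain ⟨n, hn⟩ := key b
    have hmn : m ≠ n := by
      intro h; apply hb; rw [hn, hm, h]
    rcases lt_or_gt_of_ne hmn with h | h
    · exact no_mid ψ hψ.continuous φ key 0 b m n hm hn h
    · exact no_mid ψ hψ.continuous φ key b 0 n m hn hm h
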